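/- The Lie algebra m_0(8) on ℝ^8 with bracket μ(e_1,e_i) = e_{i+1} for i = 2,…,7 (all other basis brackets zero) admits the diagonal derivation φ with φ(e_1) = e_1, φ(e_2) = 26 e_2, and φ(e_i) = (24 + i) e_i for i = 3,…,8, and also the diagonal derivation ψ with ψ(e_1) = 0, ψ(e_i) = e_i for i = 2,…,8; φ and ψ are linearly independent commuting semisimple derivations, so m_0(8) has rank at least 2. -/

import Mathlib

noncomputable section

def e (k : ℕ) : Fin 8 → ℝ := fun m => if (m : ℕ) = k then 1 else 0

/-- Structure constants of `m₀(8)` for `i < j` (0-based): `μ(e₁,e_i) = e_{i+1}`,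
`i = 2,…,7`, all other brackets zero. -/
def cplus (i j : ℕ) : Fin 8 → ℝ :=
  if i = 0 ∧ 1 ≤ j ∧ j ≤ 6 then e (j + 1) else 0

def cst (i j : ℕ) : Fin 8 → ℝ :=
  if i < j then cplus i j else if j < i then -cplus j i else 0

/-- The bracket of `m₀(8)`. -/
def mu (x y : Fin 8 → ℝ) : Fin 8 → ℝ :=
  fun k => ∑ i : Fin 8, ∑ j : Fin 8, x i * y j * cst (i : ℕ) (j : ℕ) k

/-- Diagonal entries of `φ`: `φ(e₁) = e₁`, `φ(e₂) = 26 e₂`, `φ(e_i) = (24+i) e_i` for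
`i = 3,…,8` (0-based index `k`: entry `k + 25` for `k ≥ 2`). -/
def dphi : Fin 8 → ℝ :=
  fun k => if (k : ℕ) = 0 then 1 else if (k : ℕ) = 1 then 26 else (k : ℕ) + 25

/-- Diagonal entries of `ψ`: `ψ(e₁) = 0`, `ψ(e_i) = e_i` for `i = 2,…,8`. -/
def dpsi : Fin 8 → ℝ := fun k => if (k : ℕ) = 0 then 0 else 1

/-- The diagonal endomorphism `φ`. -/
def phi : Module.End ℝ (Fin 8 → ℝ) := Matrix.toLin' (Matrix.diagonal dphi)

/-- The diagonal endomorphism `ψ`. -/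
def psi : Module.End ℝ (Fin 8 → ℝ) := Matrix.toLin' (Matrix.diagonal dpsi)

-- auxiliary lemmas

lemma toLin'_diag_apply (d : Fin 8 → ℝ) (x : Fin 8 → ℝ) (k : Fin 8) :
    Matrix.toLin' (Matrix.diagonal d) x k = d k * x k := by
  simp [Matrix.toLin'_apply, Matrix.mulVec_diagonal]

lemma deriv_of (d : Fin 8 → ℝ)
    (h : ∀ i j k : Fin 8, d k * cst i j k = (d i + d j) * cst i j k)
    (x y : Fin 8 → ℝ) :
    Matrix.toLin' (Matrix.diagonal d) (mu x y) =
      mu (Matrix.toLin' (Matrix.diagonal d) x) y +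
      mu x (Matrix.toLin' (Matrix.diagonal d) y) := by
  funext k
  have hz : ∀ z, Matrix.toLin' (Matrix.diagonal d) z k = d k * z k :=
    fun z => toLin'_diag_apply d z k
  have hz' : ∀ (z : Fin 8 → ℝ) (i : Fin 8),
      Matrix.toLin' (Matrix.diagonal d) z i = d i * z i :=
    fun z i => toLin'_diag_apply d z i
  simp only [Pi.add_apply, hz, mu, Finset.mul_sum, ← Finset.sum_add_distrib, hz']
  refine Finset.sum_congr rfl fun i _ => Finset.sum_congr rfl fun j _ => ?_
  linear_combination (x i * y j) * h i j k

lemma key_of (d : Fin 8 → ℝ)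
    (h : ∀ j k : Fin 8, 1 ≤ (j : ℕ) → (j : ℕ) ≤ 6 → (k : ℕ) = (j : ℕ) + 1 →
      d k = d 0 + d j) :
    ∀ i j k : Fin 8, d k * cst i j k = (d i + d j) * cst i j k := by
  have hc : ∀ a b k : Fin 8, d k * cplus (a : ℕ) (b : ℕ) k
      = (d a + d b) * cplus (a : ℕ) (b : ℕ) k := by
    intro a b k
    by_cases h1 : (a : ℕ) = 0 ∧ 1 ≤ (b : ℕ) ∧ (b : ℕ) ≤ 6
    · rw [cplus, if_pos h1]
      by_cases h2 : (k : ℕ) = (b : ℕ) + 1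
      · obtain ⟨ha, hb1, hb6⟩ := h1
        have ha' : a = 0 := by ext; simpa using ha
        have hd := h b k hb1 hb6 h2
        simp only [e, if_pos h2, mul_one, ha', hd]
      · simp only [e, if_neg h2, mul_zero]
    · rw [cplus, if_neg h1]
      simp
  intro i j k
  rw [cst]
  split_ifs with h1 h2
  · exact hc i j k
  · have := hc j i k
    simp only [Pi.neg_apply, mul_neg, this]
    ring
  · simp

lemma key_phi : ∀ i j k : Fin 8, dphi k * cst i j k = (dphi i + dphi j) * cst i j k := by
  apply key_of
  intro j k hj1 hj6 hk
  have hk0 : (k : ℕ) ≠ 0 := by omega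
  have hk1 : (k : ℕ) ≠ 1 := by omega
  have hj0 : (j : ℕ) ≠ 0 := by omega
  by_cases hj : (j : ℕ) = 1
  · have hk2 : (k : ℕ) = 2 := by omega
    simp [dphi, hk0, hk1, hj0, hj, hk2]
    norm_num
  · simp [dphi, hk0, hk1, hj0, hj]
    rw [hk]
    push_cast
    ring

lemma key_psi : ∀ i j k : Fin 8, dpsi k * cst i j k = (dpsi i + dpsi j) * cst i j k := by
  apply key_of
  intro j k hj1 hj6 hk
  have hk0 : (k : ℕ) ≠ 0 := by omega
  have hj0 : (j : ℕ) ≠ 0 := by omega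
  simp [dpsi, hk0, hj0]

lemma ss (d : Fin 8 → ℝ) (s : Finset ℝ) (hd : ∀ k, d k ∈ s) :
    Module.End.IsSemisimple
      (Matrix.toLin' (Matrix.diagonal d) : Module.End ℝ (Fin 8 → ℝ)) := by
  apply Module.End.isSemisimple_of_squarefree_aeval_eq_zero
    (p := ∏ a ∈ s, (Polynomial.X - Polynomial.C a))
  · exact (Polynomial.separable_prod_X_sub_C_iff'.mpr fun a _ b _ h => h).squarefree
  · have h1 : (Matrix.toLin' (Matrix.diagonal d) : Module.End ℝ (Fin 8 → ℝ)) =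
        Matrix.toLinAlgEquiv' ((Matrix.diagonalAlgHom (R := ℝ) (n := Fin 8) (α := ℝ)) d) := by
      ext x k
      simp [Matrix.toLinAlgEquiv'_apply, Matrix.diagonalAlgHom, Matrix.diagonalRingHom,
        Matrix.mulVec_diagonal, toLin'_diag_apply, RingHom.coe_mk, MonoidHom.coe_mk,
        OneHom.coe_mk, Matrix.diagonal_apply, Pi.single_apply]
      rfl
    have h2 : Polynomial.aeval d (∏ a ∈ s, (Polynomial.X - Polynomial.C a))
        = (0 : Fin 8 → ℝ) := by
      funext k
      have := (Polynomial.aeval_algHom_apply (Pi.evalAlgHom ℝ (fun _ => ℝ) k) d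
        (∏ a ∈ s, (Polynomial.X - Polynomial.C a))).symm
      rw [Pi.zero_apply]
      rw [show (Polynomial.aeval d (∏ a ∈ s, (Polynomial.X - Polynomial.C a))) k =
        Polynomial.aeval (d k) (∏ a ∈ s, (Polynomial.X - Polynomial.C a)) from this.symm ▸ rfl]
      · simp only [map_prod, map_sub, Polynomial.aeval_X, Polynomial.aeval_C]
        exact Finset.prod_eq_zero (hd k) (by simp)
    rw [h1, Polynomial.aeval_algHom_apply, Polynomial.aeval_algHom_apply, h2,
      map_zero, map_zero]

/-- `φ` and `ψ` are linearly independent commuting semisimple derivations of `m₀(8)`,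
so `m₀(8)` has rank at least `2`. -/
theorem stmt19 :
    (∀ x y : Fin 8 → ℝ, phi (mu x y) = mu (phi x) y + mu x (phi y)) ∧
    (∀ x y : Fin 8 → ℝ, psi (mu x y) = mu (psi x) y + mu x (psi y)) ∧
    Commute phi psi ∧
    LinearIndependent ℝ ![phi, psi] ∧
    phi.IsSemisimple ∧ psi.IsSemisimple := by
  refine ⟨deriv_of dphi key_phi, deriv_of dpsi key_psi, ?_, ?_, ?_, ?_⟩
  · show phi * psi = psi * phi
    simp only [phi, psi, Module.End.mul_eq_comp, ← Matrix.toLin'_mul,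
      Matrix.diagonal_mul_diagonal, mul_comm]
  · rw [LinearIndependent.pair_iff]
    intro s t h
    have h0 : (s • phi + t • psi) (e 0) 0 = 0 := by rw [h]; rfl
    have h1 : (s • phi + t • psi) (e 1) 1 = 0 := by rw [h]; rfl
    simp only [LinearMap.add_apply, LinearMap.smul_apply, Pi.add_apply, Pi.smul_apply,
      phi, psi, toLin'_diag_apply, dphi, dpsi, e, smul_eq_mul] at h0 h1
    norm_num at h0 h1
    constructor <;> linarith
  · exact ss dphi {1, 26, 27, 28, 29, 30, 31, 32}
      (by intro k; fin_cases k <;> simp [dphi] <;> norm_num)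
  · exact ss dpsi {0, 1} (by intro k; fin_cases k <;> simp [dpsi])

end
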